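/- Fix μ ≠ 0 and ρ ∈ ℝ. The function F(x,y) = μ²y² + (log x - 1)²x² + ρμ²x², defined for x > 0, is a conserved quantity of the system x' = y, y' = -(x/μ²)(log²x - log x + ρμ²): along any solution (x(s), y(s)) with x(s) > 0, the value F(x(s), y(s)) is constant. -/

import Mathlib

theorem conserved_quantity (μ ρ : ℝ) (hμ : μ ≠ 0) (x y : ℝ → ℝ)
    (hx : Differentiable ℝ x) (hy : Differentiable ℝ y)
    (hpos : ∀ s, 0 < x s)
    (hx' : ∀ s, deriv x s = y s)
    (hy' : ∀ s, deriv y s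
      = -(x s / μ ^ 2) * ((Real.log (x s)) ^ 2 - Real.log (x s) + ρ * μ ^ 2)) :
    ∀ s t : ℝ,
      μ ^ 2 * (y s) ^ 2 + (Real.log (x s) - 1) ^ 2 * (x s) ^ 2 + ρ * μ ^ 2 * (x s) ^ 2
      = μ ^ 2 * (y t) ^ 2 + (Real.log (x t) - 1) ^ 2 * (x t) ^ 2 + ρ * μ ^ 2 * (x t) ^ 2 := by
  set g : ℝ → ℝ := fun s =>
    μ ^ 2 * (y s) ^ 2 + (Real.log (x s) - 1) ^ 2 * (x s) ^ 2 + ρ * μ ^ 2 * (x s) ^ 2 with hg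
  have key : ∀ u, HasDerivAt g 0 u := by
    intro u
    have hxu : HasDerivAt x (y u) u := by
      have := (hx u).hasDerivAt
      rwa [hx' u] at this
    have hyu : HasDerivAt y
        (-(x u / μ ^ 2) * ((Real.log (x u)) ^ 2 - Real.log (x u) + ρ * μ ^ 2)) u := by
      have := (hy u).hasDerivAt
      rwa [hy' u] at this
    have hlog : HasDerivAt (fun s => Real.log (x s)) (y u / x u) u :=
      hxu.log (hpos u).ne'
    have h1 : HasDerivAt (fun s => μ ^ 2 * (y s) ^ 2)
        (μ ^ 2 * (2 * y u ^ 1 * (-(x u / μ ^ 2) * ((Real.log (x u)) ^ 2 - Real.log (x u) + ρ * μ ^ 2)))) u :=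
      (hyu.pow 2).const_mul _
    have h2 : HasDerivAt (fun s => (Real.log (x s) - 1) ^ 2 * (x s) ^ 2)
        ((2 * (Real.log (x u) - 1) ^ 1 * (y u / x u)) * (x u) ^ 2
          + (Real.log (x u) - 1) ^ 2 * (2 * x u ^ 1 * y u)) u :=
      ((hlog.sub_const 1).pow 2).mul (hxu.pow 2)
    have h3 : HasDerivAt (fun s => ρ * μ ^ 2 * (x s) ^ 2)
        (ρ * μ ^ 2 * (2 * x u ^ 1 * y u)) u :=
      (hxu.pow 2).const_mul _
    have htot := (h1.add h2).add h3
    convert htot using 1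
    case e'_4 => rfl
    case e'_5 => rfl
    case e'_8 => rfl
    have hx0 : x u ≠ 0 := (hpos u).ne'
    field_simp
    ring
  intro s t
  have hdiff : Differentiable ℝ g := fun u => (key u).differentiableAt
  have hzero : ∀ u, deriv g u = 0 := fun u => (key u).deriv
  exact is_const_of_deriv_eq_zero hdiff hzero s t
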